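/- Fix ε₀ > 0 sufficiently small, set α := 1 + ε₀ and ε₁ := ε₀²/18, and define λ_q := ⌊λ₀^{α^q}⌋, δ_q := λ_q^{−2/5+2ε₀}, μ_q := δ_{q−1}^{1/4} δ_q^{1/4} λ_{q−1}^{1/2} λ_q^{1/2} for q ≥ 1, with λ₀ sufficiently large. Let d ∈ (0,1) satisfy d > (1+α)(4/5+ε₀) / ((1+α)(4/5+ε₀) + 2αε₁). Then the tail sums Σ_{q'=q}^{∞} λ_{q'}^{−d ε₁} μ_{q'}^{1−d} converge and tend to 0 as q → ∞. -/
import Mathlib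


open scoped BigOperators

noncomputable section

/-- `λ_q := ⌊λ₀^{(1+ε₀)^q}⌋`. -/
def lamP (l₀ ε₀ : ℝ) (q : ℕ) : ℝ := ((⌊l₀ ^ ((1 + ε₀) ^ q)⌋ : ℤ) : ℝ)

/-- `δ_q := λ_q^{−2/5+2ε₀}`. -/
def delP (l₀ ε₀ : ℝ) (q : ℕ) : ℝ := lamP l₀ ε₀ q ^ (-(2 : ℝ)/5 + 2 * ε₀)

/-- `μ_q := δ_{q−1}^{1/4} δ_q^{1/4} λ_{q−1}^{1/2} λ_q^{1/2}` (for `q ≥ 1`). -/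
def muP (l₀ ε₀ : ℝ) (q : ℕ) : ℝ :=
  delP l₀ ε₀ (q - 1) ^ ((1 : ℝ)/4) * delP l₀ ε₀ q ^ ((1 : ℝ)/4)
    * lamP l₀ ε₀ (q - 1) ^ ((1 : ℝ)/2) * lamP l₀ ε₀ q ^ ((1 : ℝ)/2)

/-- The general term `λ_q^{−dε₁} μ_q^{1−d}` (with `ε₁ = ε₀²/18`) of the Hausdorff
covering estimate. -/
def covTerm (l₀ ε₀ d : ℝ) (q : ℕ) : ℝ :=
  lamP l₀ ε₀ q ^ (-(d * (ε₀ ^ 2 / 18))) * muP l₀ ε₀ q ^ (1 - d)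

/-- **Convergence of the covering sums** (Section 7 of the paper): for
`d > (1+α)(4/5+ε₀)/((1+α)(4/5+ε₀)+2αε₁)` the tail sums
`Σ_{q'≥q} λ_{q'}^{−dε₁} μ_{q'}^{1−d}` converge and tend to `0` as `q → ∞`. -/
theorem covering_sums_tendto_zero :
    ∃ ε' : ℝ, 0 < ε' ∧ ∀ ε₀ : ℝ, 0 < ε₀ → ε₀ < ε' →
    ∃ Λ₀ : ℝ, ∀ l₀ : ℝ, Λ₀ ≤ l₀ →
    ∀ d : ℝ, 0 < d → d < 1 →
      ((1 + (1 + ε₀)) * (4/5 + ε₀))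
          / ((1 + (1 + ε₀)) * (4/5 + ε₀) + 2 * (1 + ε₀) * (ε₀ ^ 2 / 18)) < d →
      Summable (fun q' : ℕ => covTerm l₀ ε₀ d (q' + 1)) ∧
      Filter.Tendsto (fun q : ℕ => ∑' i : ℕ, covTerm l₀ ε₀ d (q + 1 + i))
        Filter.atTop (nhds 0) := by
  refine ⟨1/5, by norm_num, fun ε₀ hε hε5 => ⟨2, fun l₀ hl => fun d hd0 hd1 hd => ?_⟩⟩
  set α : ℝ := 1 + ε₀ with hα
  set ε₁ : ℝ := ε₀ ^ 2 / 18 with hε₁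
  set β : ℝ := 2/5 + ε₀/2 with hβ
  set c : ℝ := (1 + α) * β * (1 - d) - α * d * ε₁ with hc
  have hε₁pos : 0 < ε₁ := by positivity
  have hβpos : 0 < β := by positivity
  have hαpos : (0:ℝ) < α := by positivity
  -- c < 0
  have hcneg : c < 0 := by
    have hD : 0 < (1 + α) * (4/5 + ε₀) + 2 * α * ε₁ := by positivity
    rw [div_lt_iff₀ hD] at hd
    have h2c : 2 * c = (1 + α) * (4/5 + ε₀) - d * ((1 + α) * (4/5 + ε₀) + 2 * α * ε₁) := by
      rw [hc, hβ]; ring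
    nlinarith [hd, h2c]
  have hl1 : (1:ℝ) < l₀ := by linarith
  have hl0 : (0:ℝ) < l₀ := by linarith
  -- basic facts about L and lamP
  have hL2 : ∀ q : ℕ, (2:ℝ) ≤ l₀ ^ ((1 + ε₀) ^ q) := by
    intro q
    have h1e : (1:ℝ) ≤ (1 + ε₀) ^ q := one_le_pow₀ (by linarith)
    calc (2:ℝ) ≤ l₀ ^ (1:ℝ) := by rw [Real.rpow_one]; exact hl
      _ ≤ l₀ ^ ((1 + ε₀) ^ q) := Real.rpow_le_rpow_of_exponent_le hl1.le h1e
  have hlam_le : ∀ q : ℕ, lamP l₀ ε₀ q ≤ l₀ ^ ((1 + ε₀) ^ q) := fun q => Int.floor_le _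
  have hlam_ge : ∀ q : ℕ, l₀ ^ ((1 + ε₀) ^ q) / 2 ≤ lamP l₀ ε₀ q := by
    intro q
    have h1 := Int.sub_one_lt_floor (l₀ ^ ((1 + ε₀) ^ q))
    have h2 := hL2 q
    unfold lamP
    linarith
  have hlam1 : ∀ q : ℕ, (1:ℝ) ≤ lamP l₀ ε₀ q := fun q => le_trans (by linarith [hL2 q]) (hlam_ge q)
  have hlampos : ∀ q : ℕ, (0:ℝ) < lamP l₀ ε₀ q := fun q => lt_of_lt_of_le one_pos (hlam1 q)
  -- rewrite covTerm
  have key : ∀ A : ℝ, 0 < A →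
      (A ^ (-(2:ℝ)/5 + 2 * ε₀)) ^ ((1:ℝ)/4) * A ^ ((1:ℝ)/2) = A ^ β := by
    intro A hA
    rw [← Real.rpow_mul hA.le, ← Real.rpow_add hA]
    congr 1
    rw [hβ]; ring
  have hcov : ∀ q : ℕ, covTerm l₀ ε₀ d (q+1) =
      lamP l₀ ε₀ q ^ (β * (1-d)) * lamP l₀ ε₀ (q+1) ^ (β * (1-d) - d * ε₁) := by
    intro q
    have hA := hlampos q
    have hX := hlampos (q+1)
    have hmu : muP l₀ ε₀ (q+1) = lamP l₀ ε₀ q ^ β * lamP l₀ ε₀ (q+1) ^ β := by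
      rw [← key _ hA, ← key _ hX]
      unfold muP delP
      simp only [Nat.add_sub_cancel]
      ring
    unfold covTerm
    rw [hmu, Real.mul_rpow (Real.rpow_nonneg hA.le _) (Real.rpow_nonneg hX.le _),
      ← Real.rpow_mul hA.le, ← Real.rpow_mul hX.le,
      show β * (1-d) - d * ε₁ = β * (1-d) + -(d * (ε₀ ^ 2 / 18)) by rw [hε₁]; ring,
      Real.rpow_add hX]
    ring
  -- main bound
  have hbound : ∀ q : ℕ, covTerm l₀ ε₀ d (q+1) ≤ 2 * l₀ ^ ((1 + ε₀) ^ q * c) := by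
    intro q
    rw [hcov q]
    set b1 : ℝ := β * (1-d) with hb1
    set e2 : ℝ := β * (1-d) - d * ε₁ with he2
    have hb1nn : 0 ≤ b1 := by
      have : 0 ≤ 1 - d := by linarith
      positivity
    have ht1 : lamP l₀ ε₀ q ^ b1 ≤ (l₀ ^ ((1 + ε₀) ^ q)) ^ b1 :=
      Real.rpow_le_rpow (hlampos q).le (hlam_le q) hb1nn
    have he2lb : -1 ≤ e2 := by
      have h1 : d * ε₁ ≤ 1 := by
        have : ε₁ ≤ 1 := by rw [hε₁]; nlinarith
        nlinarith
      nlinarith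
    have ht2 : lamP l₀ ε₀ (q+1) ^ e2 ≤ 2 * (l₀ ^ ((1 + ε₀) ^ (q+1))) ^ e2 := by
      set L : ℝ := l₀ ^ ((1 + ε₀) ^ (q+1)) with hLdef
      have hLpos : 0 < L := Real.rpow_pos_of_pos hl0 _
      rcases le_or_gt 0 e2 with hpos | hneg
      · have := Real.rpow_le_rpow (hlampos (q+1)).le (hlam_le (q+1)) hpos
        have hnn : 0 ≤ L ^ e2 := Real.rpow_nonneg hLpos.le _
        linarith
      · have h1 : lamP l₀ ε₀ (q+1) ^ e2 ≤ (L / 2) ^ e2 :=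
          Real.rpow_le_rpow_of_nonpos (by linarith [hL2 (q+1)] : (0:ℝ) < L / 2)
            (hlam_ge (q+1)) hneg.le
        have h2 : (L / 2) ^ e2 = L ^ e2 / (2:ℝ) ^ e2 :=
          Real.div_rpow hLpos.le (by norm_num : (0:ℝ) ≤ 2) e2
        have h3 : (1:ℝ)/2 ≤ (2:ℝ) ^ e2 := by
          calc (1:ℝ)/2 = (2:ℝ) ^ (-1:ℝ) := by
                rw [Real.rpow_neg_one]; norm_num
            _ ≤ (2:ℝ) ^ e2 := Real.rpow_le_rpow_of_exponent_le (by norm_num) he2lb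
        have h4 : L ^ e2 / (2:ℝ) ^ e2 ≤ L ^ e2 / (1/2) :=
          div_le_div_of_nonneg_left (Real.rpow_nonneg hLpos.le _) (by norm_num) h3
        have h5 : L ^ e2 / ((1:ℝ)/2) = 2 * L ^ e2 := by ring
        linarith
    have hxnn : 0 ≤ lamP l₀ ε₀ q ^ b1 := Real.rpow_nonneg (hlampos q).le _
    have hynn : 0 ≤ lamP l₀ ε₀ (q+1) ^ e2 := Real.rpow_nonneg (hlampos (q+1)).le _
    calc lamP l₀ ε₀ q ^ b1 * lamP l₀ ε₀ (q+1) ^ e2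
        ≤ (l₀ ^ ((1 + ε₀) ^ q)) ^ b1 * (2 * (l₀ ^ ((1 + ε₀) ^ (q+1))) ^ e2) := by
          apply mul_le_mul ht1 ht2 hynn (Real.rpow_nonneg (Real.rpow_pos_of_pos hl0 _).le _)
      _ = 2 * ((l₀ ^ ((1 + ε₀) ^ q)) ^ b1 * (l₀ ^ ((1 + ε₀) ^ (q+1))) ^ e2) := by ring
      _ = 2 * l₀ ^ ((1 + ε₀) ^ q * c) := by
          rw [← Real.rpow_mul hl0.le, ← Real.rpow_mul hl0.le, ← Real.rpow_add hl0]
          congr 1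
          rw [pow_succ, hc, hb1, he2, hα]
          ring
  -- geometric comparison
  set r : ℝ := l₀ ^ (ε₀ * c) with hr
  have hr0 : 0 ≤ r := (Real.rpow_pos_of_pos hl0 _).le
  have hr1 : r < 1 := by
    rw [hr]
    have : ε₀ * c < 0 := mul_neg_of_pos_of_neg hε hcneg
    exact Real.rpow_lt_one_of_one_lt_of_neg hl1 this
  have hgeo : ∀ q : ℕ, 2 * l₀ ^ ((1 + ε₀) ^ q * c) ≤ (2 * l₀ ^ c) * r ^ q := by
    intro q
    have hberno : (1:ℝ) + q * ε₀ ≤ (1 + ε₀) ^ q := one_add_mul_le_pow (by linarith) q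
    have hexp : (1 + ε₀) ^ q * c ≤ (1 + q * ε₀) * c := by
      exact mul_le_mul_of_nonpos_right hberno hcneg.le
    have h1 : l₀ ^ ((1 + ε₀) ^ q * c) ≤ l₀ ^ ((1 + (q:ℝ) * ε₀) * c) :=
      Real.rpow_le_rpow_of_exponent_le hl1.le hexp
    have h2 : l₀ ^ ((1 + (q:ℝ) * ε₀) * c) = l₀ ^ c * r ^ q := by
      rw [hr, ← Real.rpow_natCast (l₀ ^ (ε₀ * c)) q, ← Real.rpow_mul hl0.le,
        ← Real.rpow_add hl0]
      congr 1
      ring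
    have h3 : (2 * l₀ ^ c) * r ^ q = 2 * (l₀ ^ c * r ^ q) := by ring
    rw [h3, ← h2]
    linarith
  have hdel : ∀ q : ℕ, 0 ≤ delP l₀ ε₀ q := fun q =>
    Real.rpow_nonneg (hlampos q).le _
  have hmunn : ∀ q : ℕ, 0 ≤ muP l₀ ε₀ q := by
    intro q
    unfold muP
    exact mul_nonneg (mul_nonneg (mul_nonneg (Real.rpow_nonneg (hdel _) _)
      (Real.rpow_nonneg (hdel _) _)) (Real.rpow_nonneg (hlampos _).le _))
      (Real.rpow_nonneg (hlampos _).le _)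
  have hnn : ∀ q : ℕ, 0 ≤ covTerm l₀ ε₀ d q := fun q =>
    mul_nonneg (Real.rpow_nonneg (hlampos q).le _) (Real.rpow_nonneg (hmunn q) _)
  have hsum : Summable (fun q' : ℕ => covTerm l₀ ε₀ d (q' + 1)) := by
    apply Summable.of_nonneg_of_le (fun q => hnn (q+1))
      (fun q => le_trans (hbound q) (hgeo q))
    exact (summable_geometric_of_lt_one hr0 hr1).mul_left _
  refine ⟨hsum, ?_⟩
  have htail := tendsto_sum_nat_add (fun i : ℕ => covTerm l₀ ε₀ d (i + 1))
  refine htail.congr fun q => ?_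
  exact tsum_congr fun i => by congr 1; omega
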